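/- There are exactly 25 persistent graphs on 5 vertices. -/

import Mathlib

/-- A graph on the ordered vertex set `Fin n` (representing `{1,…,n}`) is *persistent* if it
contains the Hamilton path `1,…,n`, satisfies the X-property and the bar-property. -/
def IsPersistent {n : ℕ} (G : SimpleGraph (Fin n)) : Prop :=
  (∀ i j : Fin n, (i : ℕ) + 1 = (j : ℕ) → G.Adj i j) ∧
  (∀ a b c d : Fin n, a < b → b < c → c < d → G.Adj a c → G.Adj b d → G.Adj a d) ∧
  (∀ a b : Fin n, (a : ℕ) + 1 < (b : ℕ) → G.Adj a b →
    ∃ x : Fin n, a < x ∧ x < b ∧ G.Adj a x ∧ G.Adj x b)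

/-- Index type for the unordered pairs of vertices of `Fin 5`. -/
abbrev Idx := {p : Fin 5 × Fin 5 // p.1 < p.2}

/-- The graph on `Fin 5` determined by a boolean assignment on pairs. -/
def pg (f : Idx → Bool) : SimpleGraph (Fin 5) where
  Adj a b := (if h : a < b then f ⟨(a,b),h⟩ else if h : b < a then f ⟨(b,a),h⟩ else false) = true
  symm := by
    constructor
    intro a b hab
    rcases lt_trichotomy a b with h | h | h
    · simpa [dif_pos h, dif_neg (asymm h)] using hab
    · simp [h] at hab
    · simpa [dif_pos h, dif_neg (asymm h)] using hab
  loopless := by constructor; intro a h; simp at h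

lemma pg_adj (f : Idx → Bool) (a b : Fin 5) :
    (pg f).Adj a b ↔
      (if h : a < b then f ⟨(a,b),h⟩ else if h : b < a then f ⟨(b,a),h⟩ else false) = true :=
  Iff.rfl

instance (f : Idx → Bool) : DecidableRel (pg f).Adj := fun _ _ => instDecidableEqBool _ _

/-- Graphs on `Fin 5` are equivalent to boolean assignments on pairs. -/
noncomputable def ge : SimpleGraph (Fin 5) ≃ (Idx → Bool) where
  toFun G p := @decide (G.Adj p.1.1 p.1.2) (Classical.propDecidable _)
  invFun := pg
  left_inv G := by
    classical
    ext a b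
    rw [pg_adj]
    rcases lt_trichotomy a b with h | h | h
    · rw [dif_pos h]
      exact ⟨fun hh => of_decide_eq_true hh, fun hh => decide_eq_true hh⟩
    · subst h; simp [G.irrefl]
    · rw [dif_neg (asymm h), dif_pos h]
      exact ⟨fun hh => (of_decide_eq_true hh).symm, fun hh => decide_eq_true hh.symm⟩
  right_inv f := by
    funext p
    obtain ⟨⟨a, b⟩, h⟩ := p
    show @decide ((pg f).Adj a b) (Classical.propDecidable _) = f ⟨(a,b), h⟩
    have hiff : (pg f).Adj a b ↔ f ⟨(a,b), h⟩ = true := by rw [pg_adj, dif_pos h]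
    cases hb : f ⟨(a,b), h⟩
    · exact @decide_eq_false _ (Classical.propDecidable _) (fun hh => by simp [hiff, hb] at hh)
    · exact @decide_eq_true _ (Classical.propDecidable _) (hiff.mpr hb)

set_option synthInstance.maxSize 2000 in
set_option synthInstance.maxHeartbeats 1000000 in
instance (f : Idx → Bool) : Decidable (IsPersistent (pg f)) := by
  unfold IsPersistent; infer_instance

instance : DecidablePred (fun f : Idx → Bool => IsPersistent (pg f)) :=
  fun f => inferInstanceAs (Decidable (IsPersistent (pg f)))

set_option maxHeartbeats 4000000 in
set_option maxRecDepth 100000 in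
/-- there are exactly 25 persistent graphs on 5 vertices. -/
theorem count_persistent_5 : Nat.card {G : SimpleGraph (Fin 5) // IsPersistent G} = 25 := by
  have h : ∀ G : SimpleGraph (Fin 5), IsPersistent G ↔ IsPersistent (pg (ge G)) := fun G => by
    rw [show pg (ge G) = G from ge.left_inv G]
  rw [Nat.card_congr (ge.subtypeEquiv (q := fun f => IsPersistent (pg f)) h),
    Nat.card_eq_fintype_card]
  decide
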